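/- arXiv:1109.0364 — 6 statements merged into one kernel-verified Lean document; each statement's English description precedes it below -/
import Mathlib

section
/- If S = ρ ∘ d, where d is a metric on Y and ρ : ℝ≥0 → ℝ≥0 is continuous, strictly increasing, and satisfies ρ(0) = 0, then the topology σ induced by the pseudo-metrics d^(z)(y,ỹ) := |S(z,y) − S(z,ỹ)| coincides with the metric topology induced by d. -/
open scoped NNReal

/-- If `S = ρ ∘ d` with `d` a metric on `Y` and `ρ : ℝ≥0 → ℝ≥0` continuous,
strictly increasing and `ρ 0 = 0`, then the topology induced by the pseudo-metrics
`d^(z)(y,ỹ) = |S(z,y) − S(z,ỹ)|` (the initial topology of the maps `y ↦ S z y = ρ (d z y)`)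
coincides with the metric topology of `d`. -/
theorem sigma_topology_eq_metric {Y : Type*} [MetricSpace Y]
    (ρ : ℝ≥0 → ℝ≥0) (hcont : Continuous ρ) (hmono : StrictMono ρ) (hρ0 : ρ 0 = 0) :
    (⨅ z : Y, TopologicalSpace.induced (fun y => ρ (nndist z y)) inferInstance)
      = (inferInstance : TopologicalSpace Y) := by
  refine le_antisymm ?_ (le_iInf fun z =>
    continuous_iff_le_induced.mp (hcont.comp (continuous_const.nndist continuous_id)))
  refine le_of_nhds_le_nhds fun x => ?_
  calc @nhds Y (⨅ z : Y, TopologicalSpace.induced (fun y => ρ (nndist z y)) inferInstance) x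
      = ⨅ z : Y, @nhds Y (TopologicalSpace.induced (fun y => ρ (nndist z y)) inferInstance) x :=
        nhds_iInf
    _ ≤ @nhds Y (TopologicalSpace.induced (fun y => ρ (nndist x y)) inferInstance) x :=
        iInf_le _ x
    _ = Filter.comap (fun y => ρ (nndist x y)) (nhds (ρ (nndist x x))) := nhds_induced _ _
    _ ≤ nhds x := ?_
  rw [nndist_self, hρ0]
  refine (Metric.nhds_basis_ball.ge_iff).mpr fun ε hε => ?_
  refine Filter.mem_comap.mpr ⟨Set.Iio (ρ ε.toNNReal), Iio_mem_nhds ?_, fun y hy => ?_⟩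
  · calc (0 : ℝ≥0) = ρ 0 := hρ0.symm
      _ < ρ ε.toNNReal := hmono (by simpa using hε)
  · have : nndist x y < ε.toNNReal := hmono.lt_iff_lt.mp hy
    have : (nndist x y : ℝ) < ε := by
      calc (nndist x y : ℝ) < ε.toNNReal := by exact_mod_cast this
        _ = ε := Real.coe_toNNReal _ hε.le
    rw [Metric.mem_ball, dist_comm, dist_nndist]
    exact_mod_cast this
end

section
/- Suppose F^(l) → F with respect to τ (i.e., d_{K,L}(F^(l),F) → 0 on sequentially compact sets K, L), x^(l) → x in τ, y^(l) → y in σ, F ∈ F(τ). Then lim_l S(F^(l)(x), y^(l)) = S(F(x), y) and S(F(x),y) ≤ liminf_l S(F^(l)(x^(l)), y^(l)). -/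
open Filter Topology
open scoped ENNReal

/-- Convergence of a sequence in `Y` with respect to the topology `σ` induced by the
pseudo-metrics `d^(z)(y,ỹ) = |S(z,y) − S(z,ỹ)|`: `y^(l) → p` iff `S(z, y^(l)) → S(z,p)`
for every `z ∈ Y`. -/
def SigmaTendsto {Y : Type*} (S : Y → Y → ℝ) (y : ℕ → Y) (p : Y) : Prop :=
  ∀ z : Y, Tendsto (fun l => S z (y l)) atTop (nhds (S z p))

/-- Sequential compactness of a subset of `Y` with respect to the topology `σ`. -/
def SeqCompactSigma {Y : Type*} (S : Y → Y → ℝ) (L : Set Y) : Prop :=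
  ∀ y : ℕ → Y, (∀ l, y l ∈ L) →
    ∃ p ∈ L, ∃ φ : ℕ → ℕ, StrictMono φ ∧ SigmaTendsto S (fun l => y (φ l)) p

/-- Sequential lower semi-continuity of `(x,y) ↦ S(F(x),y)` with respect to `τ × σ`. -/
def SeqLSCop {X Y : Type*} [TopologicalSpace X] (S : Y → Y → ℝ) (F : X → Y) : Prop :=
  ∀ (x : ℕ → X) (x₀ : X) (y : ℕ → Y) (y₀ : Y),
    Tendsto x atTop (nhds x₀) → SigmaTendsto S y y₀ →
      S (F x₀) y₀ ≤ liminf (fun l => S (F (x l)) (y l)) atTop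

/-- The pseudo-metric `d_{K,L}(F,G) = sup {|S(F(x),z) − S(G(x),z)| : x ∈ K, z ∈ L}`
(with values in `[0,∞]`). -/
noncomputable def dKL {X Y : Type*} (S : Y → Y → ℝ) (K : Set X) (L : Set Y)
    (F G : X → Y) : ℝ≥0∞ :=
  ⨆ x ∈ K, ⨆ z ∈ L, ENNReal.ofReal |S (F x) z - S (G x) z|

/-- Convergence of operators `F^(l) → F` with respect to `τ`: `d_{K,L}(F^(l),F) → 0`
for every sequentially `τ`-compact `K ⊆ X` and sequentially `σ`-compact `L ⊆ Y`. -/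
def OpTendsto {X Y : Type*} [TopologicalSpace X] (S : Y → Y → ℝ)
    (F' : ℕ → X → Y) (F : X → Y) : Prop :=
  ∀ (K : Set X) (L : Set Y), IsSeqCompact K → SeqCompactSigma S L →
    Tendsto (fun l => dKL S K L (F' l) F) atTop (nhds 0)

/- Abstract subsequence extraction: any sequence with values in `insert p (range g)`,
where `g` converges to `p` (for an abstract convergence notion closed under constants and
subsequences), has a convergent subsequence with limit in `insert p (range g)`. -/
private lemma subseq_key {α : Type*} (C : (ℕ → α) → α → Prop)
    (hconst : ∀ a : α, C (fun _ => a) a)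
    (hsub : ∀ (u : ℕ → α) (p : α) (φ : ℕ → ℕ), C u p → StrictMono φ → C (fun n => u (φ n)) p)
    (g : ℕ → α) (p : α) (hg : C g p)
    (z : ℕ → α) (hz : ∀ k, z k ∈ insert p (Set.range g)) :
    ∃ q ∈ insert p (Set.range g), ∃ φ : ℕ → ℕ, StrictMono φ ∧ C (fun n => z (φ n)) q := by
  by_cases hinf : {k | z k = p}.Infinite
  · refine ⟨p, Set.mem_insert _ _, Nat.nth (fun k => z k = p), Nat.nth_strictMono hinf, ?_⟩
    have hconsteq : (fun n => z (Nat.nth (fun k => z k = p) n)) = fun _ => p := by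
      funext n; exact Nat.nth_mem_of_infinite hinf n
    rw [hconsteq]; exact hconst p
  · have hfin : {k | z k = p}.Finite := Set.not_infinite.mp hinf
    obtain ⟨N, hN⟩ : ∃ N, ∀ k ≥ N, z k ≠ p := by
      rcases hfin.bddAbove with ⟨M, hM⟩
      exact ⟨M + 1, fun k hk hkp => absurd (hM hkp) (by omega)⟩
    have hrep : ∀ k, ∃ n, z (k + N) = g n := by
      intro k
      rcases hz (k + N) with h | ⟨n, hn⟩
      · exact absurd h (hN _ (by omega))
      · exact ⟨n, hn.symm⟩
    choose m hm using hrep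
    by_cases hfib : ∃ v, {k | m k = v}.Infinite
    · rcases hfib with ⟨v, hv⟩
      refine ⟨g v, Set.mem_insert_of_mem _ ⟨v, rfl⟩,
        fun n => Nat.nth (fun k => m k = v) n + N, ?_, ?_⟩
      · exact fun i j hij => Nat.add_lt_add_right (Nat.nth_strictMono hv hij) N
      · have hconsteq : (fun n => z (Nat.nth (fun k => m k = v) n + N)) = fun _ => g v := by
          funext n
          have h1 := hm (Nat.nth (fun k => m k = v) n)
          have h2 : m (Nat.nth (fun k => m k = v) n) = v := Nat.nth_mem_of_infinite hv n
          rw [h1, h2]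
        rw [hconsteq]; exact hconst (g v)
    · push_neg at hfib
      have hm_top : Tendsto m atTop atTop := by
        refine tendsto_atTop.2 fun b => ?_
        have hfin2 : {k | ¬ b ≤ m k}.Finite := by
          have hsubset : {k | ¬ b ≤ m k} ⊆ ⋃ v ∈ Finset.range b, {k | m k = v} := by
            intro k hk
            simp only [Set.mem_iUnion]
            exact ⟨m k, Finset.mem_range.mpr (not_le.mp hk), rfl⟩
          exact Set.Finite.subset (Set.Finite.biUnion (Finset.range b).finite_toSet
            fun v _ => hfib v) hsubset
        have hev : ∀ᶠ k in cofinite, b ≤ m k := by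
          rw [eventually_cofinite]; exact hfin2
        rwa [Nat.cofinite_eq_atTop] at hev
      obtain ⟨ψ, hψ, hmψ⟩ := strictMono_subseq_of_tendsto_atTop hm_top
      refine ⟨p, Set.mem_insert _ _, fun n => ψ n + N, ?_, ?_⟩
      · exact fun i j hij => Nat.add_lt_add_right (hψ hij) N
      · have heq : (fun n => z (ψ n + N)) = fun n => g (m (ψ n)) := funext fun n => hm (ψ n)
        rw [heq]
        exact hsub g p (fun n => m (ψ n)) hg hmψ

private lemma real_sSup_le_of (A B : Set ℝ) (hA : A.Nonempty) (hBdd : BddAbove B)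
    (hAB : ∀ d ∈ A, ∀ ε : ℝ, 0 < ε → d - ε ∈ B) : sSup A ≤ sSup B :=
  csSup_le hA fun d hd => le_of_forall_sub_le fun ε hε => le_csSup hBdd (hAB d hd ε hε)

private lemma real_sSup_eq (A B : Set ℝ)
    (hAB : ∀ d ∈ A, ∀ ε : ℝ, 0 < ε → d - ε ∈ B)
    (hBA : ∀ d ∈ B, ∀ ε : ℝ, 0 < ε → d - ε ∈ A) : sSup A = sSup B := by
  rcases A.eq_empty_or_nonempty with hA | hA
  · have hB : B = ∅ := by
      rw [Set.eq_empty_iff_forall_notMem]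
      intro d hd
      exact Set.eq_empty_iff_forall_notMem.mp hA _ (hBA d hd 1 one_pos)
    rw [hA, hB]
  · have hB : B.Nonempty := hA.elim fun d hd => ⟨d - 1, hAB d hd 1 one_pos⟩
    by_cases hbdd : BddAbove B
    · have hbddA : BddAbove A := by
        rcases hbdd with ⟨M, hM⟩
        refine ⟨M + 1, fun d hd => ?_⟩
        have := hM (hAB d hd 1 one_pos); linarith
      exact le_antisymm (real_sSup_le_of A B hA hbdd hAB) (real_sSup_le_of B A hB hbddA hBA)
    · have hbddA : ¬ BddAbove A := by
        rintro ⟨M, hM⟩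
        refine hbdd ⟨M + 1, fun d hd => ?_⟩
        have := hM (hBA d hd 1 one_pos); linarith
      rw [Real.sSup_of_not_bddAbove hbddA, Real.sSup_of_not_bddAbove hbdd]

private lemma liminf_eq_of_sub_tendsto (a b : ℕ → ℝ)
    (h : Tendsto (fun l => b l - a l) atTop (nhds 0)) :
    liminf a atTop = liminf b atTop := by
  rw [liminf_eq, liminf_eq]
  have habs : ∀ ε : ℝ, 0 < ε → ∀ᶠ l in atTop, |b l - a l| < ε := by
    intro ε hε
    have hev := h.eventually (eventually_abs_sub_lt 0 hε)
    simpa using hev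
  apply real_sSup_eq
  · intro d hd ε hε
    simp only [Set.mem_setOf_eq] at hd ⊢
    filter_upwards [hd, habs ε hε] with l h1 h2
    have := abs_lt.mp h2; linarith
  · intro d hd ε hε
    simp only [Set.mem_setOf_eq] at hd ⊢
    filter_upwards [hd, habs ε hε] with l h1 h2
    have := abs_lt.mp h2; linarith

/-- if `F^(l) → F` with respect to `τ`, `x^(l) → x` in `τ`, `y^(l) → y` in `σ`
and `F ∈ F(τ)` (i.e. `(x,y) ↦ S(F(x),y)` is sequentially lower semi-continuous), then
`lim_l S(F^(l)(x), y^(l)) = S(F(x),y)` and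
`S(F(x),y) ≤ liminf_l S(F^(l)(x^(l)), y^(l))`. -/
theorem seqconv_lemma {X Y : Type*} [TopologicalSpace X] (S : Y → Y → ℝ)
    (F' : ℕ → X → Y) (F : X → Y)
    (hF : SeqLSCop S F) (hop : OpTendsto S F' F)
    (x' : ℕ → X) (x : X) (hx : Tendsto x' atTop (nhds x))
    (y' : ℕ → Y) (y : Y) (hy : SigmaTendsto S y' y) :
    Tendsto (fun l => S (F' l x) (y' l)) atTop (nhds (S (F x) y)) ∧
      S (F x) y ≤ liminf (fun l => S (F' l (x' l)) (y' l)) atTop := by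
  set K : Set X := insert x (Set.range x') with hKdef
  set L : Set Y := insert y (Set.range y') with hLdef
  have hK : IsSeqCompact K := by
    intro u hu
    obtain ⟨q, hq, φ, hφ, hC⟩ := subseq_key (fun u p => Tendsto u atTop (nhds p))
      (fun a => tendsto_const_nhds)
      (fun u p φ hC hφ => hC.comp hφ.tendsto_atTop) x' x hx u hu
    exact ⟨q, hq, φ, hφ, hC⟩
  have hL : SeqCompactSigma S L := by
    intro v hv
    exact subseq_key (SigmaTendsto S) (fun a z => tendsto_const_nhds)
      (fun u p φ hC hφ z => (hC z).comp hφ.tendsto_atTop) y' y hy v hv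
  have hd : Tendsto (fun l => dKL S K L (F' l) F) atTop (nhds 0) := hop K L hK hL
  have habs : ∀ (u : ℕ → X) (v : ℕ → Y), (∀ l, u l ∈ K) → (∀ l, v l ∈ L) →
      Tendsto (fun l => |S (F' l (u l)) (v l) - S (F (u l)) (v l)|) atTop (nhds 0) := by
    intro u v hu hv
    have hle : ∀ l, ENNReal.ofReal |S (F' l (u l)) (v l) - S (F (u l)) (v l)| ≤
        dKL S K L (F' l) F := by
      intro l
      calc ENNReal.ofReal |S (F' l (u l)) (v l) - S (F (u l)) (v l)|
          ≤ ⨆ z ∈ L, ENNReal.ofReal |S (F' l (u l)) z - S (F (u l)) z| :=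
            le_biSup (f := fun z => ENNReal.ofReal |S (F' l (u l)) z - S (F (u l)) z|) (hv l)
        _ ≤ dKL S K L (F' l) F :=
            le_biSup (fun x₀ => ⨆ z ∈ L, ENNReal.ofReal |S (F' l x₀) z - S (F x₀) z|) (hu l)
    have h0 : Tendsto (fun l => ENNReal.ofReal
        |S (F' l (u l)) (v l) - S (F (u l)) (v l)|) atTop (nhds 0) :=
      tendsto_of_tendsto_of_tendsto_of_le_of_le tendsto_const_nhds hd
        (fun l => zero_le) hle
    have h1 := (ENNReal.tendsto_toReal (a := 0) (by simp)).comp h0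
    simpa [Function.comp_def, ENNReal.toReal_ofReal, abs_nonneg] using h1
  have habs_to_zero : ∀ c : ℕ → ℝ, Tendsto (fun l => |c l|) atTop (nhds 0) →
      Tendsto c atTop (nhds 0) := by
    intro c hc
    have hneg : Tendsto (fun l => -|c l|) atTop (nhds 0) := by
      simpa using hc.neg
    exact tendsto_of_tendsto_of_tendsto_of_le_of_le hneg hc
      (fun l => neg_abs_le _) (fun l => le_abs_self _)
  -- Part 1
  have h1abs := habs (fun _ => x) y' (fun _ => Set.mem_insert _ _)
    (fun l => Set.mem_insert_of_mem _ (Set.mem_range_self l))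
  have h1 : Tendsto (fun l => S (F' l x) (y' l) - S (F x) (y' l)) atTop (nhds 0) :=
    habs_to_zero _ h1abs
  have hpart1 : Tendsto (fun l => S (F' l x) (y' l)) atTop (nhds (S (F x) y)) := by
    have h2 := (hy (F x)).add h1
    rw [add_zero] at h2
    have heq : (fun l => S (F x) (y' l) + (S (F' l x) (y' l) - S (F x) (y' l))) =
        fun l => S (F' l x) (y' l) := by funext l; ring
    rwa [heq] at h2
  -- Part 2
  have h3abs := habs x' y' (fun l => Set.mem_insert_of_mem _ (Set.mem_range_self l))
    (fun l => Set.mem_insert_of_mem _ (Set.mem_range_self l))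
  have h3 : Tendsto (fun l => S (F' l (x' l)) (y' l) - S (F (x' l)) (y' l)) atTop (nhds 0) :=
    habs_to_zero _ h3abs
  have heq := liminf_eq_of_sub_tendsto (fun l => S (F (x' l)) (y' l))
    (fun l => S (F' l (x' l)) (y' l)) h3
  exact ⟨hpart1, heq ▸ hF x' x y' y hx hy⟩
end

section
/- Stability of multi-parameter Tikhonov regularisation: if y^(l) → y^δ in σ, F^(l) → F^δ in the d_{K,L}-sense with all F^(l), F^δ ∈ F(τ), α^(l) → α in ℝⁿ≥0 with α ≠ 0, and x^(l) minimises T(·; α^(l), y^(l), F^(l)), then {x^(l)} has a subsequence converging in τ to a minimiser of T(·; α, y^δ, F^δ). -/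
open Filter Topology
open scoped ENNReal

/-- Sequential `τ`-coercivity: every sequence on which `R` is (finitely) bounded has a
`τ`-convergent subsequence. -/
def SeqCoercive {X : Type*} [TopologicalSpace X] (R : X → ℝ≥0∞) : Prop :=
  ∀ (u : ℕ → X) (c : ℝ≥0∞), c ≠ ⊤ → (∀ l, R (u l) ≤ c) →
    ∃ (x : X) (φ : ℕ → ℕ), StrictMono φ ∧ Tendsto (fun l => u (φ l)) atTop (nhds x)

/-- Sequential `τ`-lower semi-continuity of `R : X → [0,∞]`. -/
def SeqLSC {X : Type*} [TopologicalSpace X] (R : X → ℝ≥0∞) : Prop :=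
  ∀ (u : ℕ → X) (x : X), Tendsto u atTop (nhds x) →
    R x ≤ liminf (fun l => R (u l)) atTop

/-- The class `F(τ)`: `(x,y) ↦ S(F(x),y)` is sequentially `(τ×σ)`-lower semi-continuous and
the joint domain `D` of the regularisation terms is dense in the required sense. -/
def MemFtau {X Y : Type*} [TopologicalSpace X] {n : ℕ} (S : Y → Y → ℝ)
    (R : Fin n → X → ℝ≥0∞) (F : X → Y) : Prop :=
  SeqLSCop S F ∧
  ∀ (x : X) (y : Y), ∃ u : ℕ → X,
    (∀ l k, R k (u l) ≠ ⊤) ∧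
    Tendsto u atTop (nhds x) ∧
    (∀ k, Tendsto (fun l => R k (u l)) atTop (nhds (R k x))) ∧
    Tendsto (fun l => S (F (u l)) y) atTop (nhds (S (F x) y))

/-- The multi-parameter Tikhonov functional
`T(x; α, y, F) = S(F(x),y) + Σ_k α_k R_k(x)`, with the convention `α_k R_k(x) = 0` when
`α_k = 0` and `R_k(x) = ∞`. -/
noncomputable def Tik {X Y : Type*} {n : ℕ} (S : Y → Y → ℝ) (R : Fin n → X → ℝ≥0∞)
    (α : Fin n → ℝ) (y : Y) (F : X → Y) (x : X) : ℝ≥0∞ :=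
  ENNReal.ofReal (S (F x) y) + ∑ k, ENNReal.ofReal (α k) * R k x


section Helpers

open Filter Topology
open scoped ENNReal

private lemma myLiminfAdd {ι : Type*} {F : Filter ι} (f g : ι → ℝ≥0∞) :
    liminf f F + liminf g F ≤ liminf (fun i => f i + g i) F := by
  rw [liminf_eq, liminf_eq, sSup_eq_iSup, sSup_eq_iSup]
  refine ENNReal.biSup_add_biSup_le ⟨0, by simp⟩ ⟨0, by simp⟩ fun a ha b hb => ?_
  rw [liminf_eq]
  exact le_sSup ((ha.and hb).mono fun i ⟨h1, h2⟩ => add_le_add h1 h2)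

private lemma myLiminfAddConst {ι : Type*} (F : Filter ι) [F.NeBot] (f : ι → ℝ≥0∞) (c : ℝ≥0∞) :
    liminf (fun i => f i + c) F = liminf f F + c :=
  (Monotone.map_limsInf_of_continuousAt (F := F.map f) (f := fun x : ℝ≥0∞ => x + c)
    (fun _ _ h => add_le_add_left h c) (continuous_add_right c).continuousAt).symm

private lemma myLiminfAddZero {f g : ℕ → ℝ≥0∞} (hg : Tendsto g atTop (nhds 0)) :
    liminf (fun i => f i + g i) atTop ≤ liminf f atTop := by
  refine ENNReal.le_of_forall_pos_le_add fun ε hε _ => ?_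
  have hev : ∀ᶠ i in atTop, g i < (ε : ℝ≥0∞) := hg.eventually (gt_mem_nhds (by exact_mod_cast hε))
  calc liminf (fun i => f i + g i) atTop
      ≤ liminf (fun i => f i + (ε : ℝ≥0∞)) atTop :=
        liminf_le_liminf (hev.mono fun i hi => add_le_add_right hi.le _)
    _ = liminf f atTop + ε := myLiminfAddConst _ _ _

private lemma mySumLiminf {ι : Type*} (s : Finset ι) (p : ι → ℕ → ℝ≥0∞) :
    ∑ k ∈ s, liminf (p k) atTop ≤ liminf (fun l => ∑ k ∈ s, p k l) atTop := by
  classical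
  induction s using Finset.induction with
  | empty => simp
  | insert _ _ h ih =>
    rename_i a s
    simp only [Finset.sum_insert h]
    exact le_trans (add_le_add_right ih _) (myLiminfAdd _ _)

private lemma myOfRealLiminf {t : ℕ → ℝ} {a : ℝ} (ht : ∀ l, 0 ≤ t l)
    (h : a ≤ liminf t atTop) :
    ENNReal.ofReal a ≤ liminf (fun l => ENNReal.ofReal (t l)) atTop := by
  have hbb : IsBoundedUnder (· ≥ ·) atTop t :=
    ⟨0, Filter.eventually_map.2 (Eventually.of_forall ht)⟩
  refine (le_liminf_iff (by isBoundedDefault) (by isBoundedDefault)).2 fun b hb => ?_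
  have hbt : b ≠ ⊤ := hb.ne_top
  have h1 : b.toReal < a := (ENNReal.lt_ofReal_iff_toReal_lt hbt).1 hb
  have h2 : ∀ᶠ l in atTop, b.toReal < t l :=
    eventually_lt_of_lt_liminf (lt_of_lt_of_le h1 h) hbb
  exact h2.mono fun l hl => (ENNReal.lt_ofReal_iff_toReal_lt hbt).2 hl

private lemma myIsSeqCompact {X : Type*} [TopologicalSpace X] {v : ℕ → X} {p : X}
    (hv : Tendsto v atTop (nhds p)) : IsSeqCompact (insert p (Set.range v)) := by
  intro u hu
  classical
  by_cases hp : ∃ᶠ j in atTop, u j = p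
  · obtain ⟨φ, hφ, hconst⟩ := Filter.extraction_of_frequently_atTop hp
    refine ⟨p, Set.mem_insert _ _, φ, hφ, ?_⟩
    have : (u ∘ φ) = fun _ => p := funext fun l => hconst l
    rw [this]; exact tendsto_const_nhds
  · rw [Filter.not_frequently] at hp
    set m : ℕ → ℕ := fun j => if h : ∃ i, v i = u j then h.choose else 0 with hm_def
    have hm : ∀ j, u j ≠ p → v (m j) = u j := by
      intro j hne
      rcases hu j with h | h
      · exact absurd h hne
      · obtain ⟨i, hi⟩ := h
        have hex : ∃ i, v i = u j := ⟨i, hi⟩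
        simp only [hm_def, dif_pos hex]
        exact hex.choose_spec
    obtain ⟨N, hN⟩ := eventually_atTop.1 hp
    by_cases hsec : ∃ i, ∃ᶠ j in atTop, m j = i ∧ N ≤ j
    · obtain ⟨i, hi⟩ := hsec
      obtain ⟨φ, hφ, hval⟩ := Filter.extraction_of_frequently_atTop hi
      refine ⟨v i, Set.mem_insert_of_mem _ (Set.mem_range_self i), φ, hφ, ?_⟩
      have : (u ∘ φ) = fun _ => v i := funext fun l => by
        have h1 := hm (φ l) (hN _ (hval l).2)
        rw [Function.comp_apply, ← h1, (hval l).1]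
      rw [this]; exact tendsto_const_nhds
    · push_neg at hsec
      have hsec' : ∀ i, ∀ᶠ j in atTop, ¬(m j = i ∧ N ≤ j) := by
        intro i
        exact (hsec i).mono fun j hj ⟨h1, h2⟩ => absurd (hj h1) (not_lt.2 h2)
      have hmt : Tendsto (fun j => m (N + j)) atTop atTop := by
        rw [tendsto_atTop]
        intro b
        have hall : ∀ᶠ j in atTop, ∀ i ∈ Finset.range b, ¬(m j = i ∧ N ≤ j) :=
          (Filter.eventually_all_finset _).2 fun i _ => hsec' i
        obtain ⟨N', hN'⟩ := eventually_atTop.1 hall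
        refine eventually_atTop.2 ⟨N', fun j hj => ?_⟩
        have h1 := hN' (N + j) (le_trans hj (Nat.le_add_left _ _))
        by_contra hb
        push_neg at hb
        exact h1 (m (N + j)) (Finset.mem_range.2 hb) ⟨rfl, Nat.le_add_right _ _⟩
      refine ⟨p, Set.mem_insert _ _, fun j => N + j, fun a b h => Nat.add_lt_add_left h N, ?_⟩
      have : (u ∘ fun j => N + j) = fun j => v (m (N + j)) := funext fun j => by
        rw [Function.comp_apply, ← hm (N + j) (hN _ (Nat.le_add_right _ _))]
      rw [this]
      exact hv.comp hmt

private lemma mySigmaSeqCompact {Y : Type*} (S : Y → Y → ℝ) {v : ℕ → Y} {p : Y}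
    (hv : SigmaTendsto S v p) : SeqCompactSigma S (insert p (Set.range v)) := by
  set e : Y → (Y → ℝ) := fun y z => S z y with he
  have hev : Tendsto (fun l => e (v l)) atTop (nhds (e p)) := tendsto_pi_nhds.2 fun z => hv z
  have hK : IsSeqCompact (insert (e p) (Set.range fun l => e (v l))) := myIsSeqCompact hev
  intro y hy
  have hy' : ∀ l, e (y l) ∈ insert (e p) (Set.range fun l => e (v l)) := by
    intro l
    rcases hy l with h | ⟨i, hi⟩
    · rw [h]; exact Set.mem_insert _ _
    · exact Set.mem_insert_of_mem _ ⟨i, by simp only [← hi]⟩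
  obtain ⟨q, hq, φ, hφ, hconv⟩ := hK hy'
  rcases hq with hq | ⟨i, hi⟩
  · exact ⟨p, Set.mem_insert _ _, φ, hφ, fun z => (tendsto_pi_nhds.1 (hq ▸ hconv)) z⟩
  · exact ⟨v i, Set.mem_insert_of_mem _ (Set.mem_range_self i), φ, hφ,
      fun z => (tendsto_pi_nhds.1 (hi ▸ hconv)) z⟩

private lemma le_dKL {X Y : Type*} (S : Y → Y → ℝ) {K : Set X} {L : Set Y}
    {F G : X → Y} {x : X} {z : Y} (hx : x ∈ K) (hz : z ∈ L) :
    ENNReal.ofReal |S (F x) z - S (G x) z| ≤ dKL S K L F G :=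
  le_iSup₂_of_le x hx (le_iSup₂_of_le z hz le_rfl)

end Helpers

/-- stability: if `y^(l) → y^δ` in `σ`, `F^(l) → F^δ` in the `d_{K,L}`-sense
with all `F^(l), F^δ ∈ F(τ)`, `α^(l) → α` in `ℝⁿ_{≥0}` with `α ≠ 0`, and each `x^(l)`
minimises `T(·; α^(l), y^(l), F^(l))`, then `{x^(l)}` has a subsequence converging in `τ`
to a minimiser of `T(·; α, y^δ, F^δ)`. -/
theorem tikhonov_stability {X Y : Type*} [TopologicalSpace X] {n : ℕ}
    (S : Y → Y → ℝ) (hS0 : ∀ y z : Y, 0 ≤ S y z) (hSdef : ∀ y z : Y, S y z = 0 ↔ y = z)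
    (R : Fin n → X → ℝ≥0∞)
    (hcoer : ∀ k, SeqCoercive (R k)) (hlsc : ∀ k, SeqLSC (R k))
    (hD : ∃ x₀ : X, ∀ k, R k x₀ ≠ ⊤)
    (yδ : Y) (y' : ℕ → Y) (hy : SigmaTendsto S y' yδ)
    (Fδ : X → Y) (F' : ℕ → X → Y)
    (hFδ : MemFtau S R Fδ) (hF' : ∀ l, MemFtau S R (F' l))
    (hop : OpTendsto S F' Fδ)
    (α : Fin n → ℝ) (hα : ∀ k, 0 ≤ α k) (hαne : α ≠ 0)
    (α' : ℕ → Fin n → ℝ) (hα' : ∀ l k, 0 ≤ α' l k) (hα'ne : ∀ l, α' l ≠ 0)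
    (hαconv : ∀ k, Tendsto (fun l => α' l k) atTop (nhds (α k)))
    (x' : ℕ → X)
    (hmin : ∀ l x, Tik S R (α' l) (y' l) (F' l) (x' l) ≤ Tik S R (α' l) (y' l) (F' l) x) :
    ∃ (φ : ℕ → ℕ), StrictMono φ ∧ ∃ xα : X,
      Tendsto (fun l => x' (φ l)) atTop (nhds xα) ∧
      ∀ x : X, Tik S R α yδ Fδ xα ≤ Tik S R α yδ Fδ x := by
    classical
  obtain ⟨x₀, hx₀⟩ := hD
  obtain ⟨k₀, hk₀⟩ : ∃ k, α k ≠ 0 := by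
    by_contra h; push_neg at h; exact hαne (funext fun k => h k)
  have hk₀pos : 0 < α k₀ := lt_of_le_of_ne (hα k₀) (Ne.symm hk₀)
  have hL : SeqCompactSigma S (insert yδ (Set.range y')) := mySigmaSeqCompact S hy
  -- convergence of the Tikhonov functional at a fixed point of the joint domain
  have key : ∀ w : X, (∀ k, R k w ≠ ⊤) →
      Tendsto (fun l => Tik S R (α' l) (y' l) (F' l) w) atTop
        (nhds (Tik S R α yδ Fδ w)) := by
    intro w hw
    have hKw : IsSeqCompact (insert w (Set.range fun _ : ℕ => w)) :=
      myIsSeqCompact tendsto_const_nhds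
    have hd : Tendsto (fun l => dKL S (insert w (Set.range fun _ : ℕ => w))
        (insert yδ (Set.range y')) (F' l) Fδ) atTop (nhds 0) :=
      hop _ _ hKw hL
    have habs : ∀ l, ENNReal.ofReal |S (F' l w) (y' l) - S (Fδ w) (y' l)| ≤
        dKL S (insert w (Set.range fun _ : ℕ => w)) (insert yδ (Set.range y')) (F' l) Fδ :=
      fun l => le_dKL S (Set.mem_insert _ _) (Set.mem_insert_of_mem _ (Set.mem_range_self l))
    have h0 : Tendsto (fun l => ENNReal.ofReal |S (F' l w) (y' l) - S (Fδ w) (y' l)|)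
        atTop (nhds 0) :=
      tendsto_of_tendsto_of_tendsto_of_le_of_le tendsto_const_nhds hd (fun l => zero_le) habs
    have hreal : Tendsto (fun l => |S (F' l w) (y' l) - S (Fδ w) (y' l)|) atTop (nhds 0) := by
      have h1 := (ENNReal.tendsto_toReal (a := 0) (by simp)).comp h0
      simp only [ENNReal.toReal_zero] at h1
      exact h1.congr fun l => ENNReal.toReal_ofReal (abs_nonneg _)
    have hdiff : Tendsto (fun l => S (F' l w) (y' l) - S (Fδ w) (y' l)) atTop (nhds 0) := by
      have hneg : Tendsto (fun l => -|S (F' l w) (y' l) - S (Fδ w) (y' l)|) atTop (nhds 0) := by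
        simpa using hreal.neg
      exact tendsto_of_tendsto_of_tendsto_of_le_of_le hneg hreal
        (fun l => neg_abs_le _) (fun l => le_abs_self _)
    have hS : Tendsto (fun l => S (F' l w) (y' l)) atTop (nhds (S (Fδ w) yδ)) := by
      have := hdiff.add (hy (Fδ w))
      simpa using this
    have c1 : Tendsto (fun l => ENNReal.ofReal (S (F' l w) (y' l))) atTop
        (nhds (ENNReal.ofReal (S (Fδ w) yδ))) := ENNReal.tendsto_ofReal hS
    have c2 : Tendsto (fun l => ∑ k, ENNReal.ofReal (α' l k) * R k w) atTop
        (nhds (∑ k, ENNReal.ofReal (α k) * R k w)) :=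
      tendsto_finset_sum _ fun k _ =>
        ENNReal.Tendsto.mul_const (ENNReal.tendsto_ofReal (hαconv k)) (Or.inr (hw k))
    exact c1.add c2
  -- eventual bound on the regulariser
  have hC₀ : Tik S R α yδ Fδ x₀ ≠ ⊤ := by
    simp only [Tik]
    refine ENNReal.add_ne_top.2 ⟨ENNReal.ofReal_ne_top, ?_⟩
    exact ENNReal.sum_ne_top.2 fun k _ => ENNReal.mul_ne_top ENNReal.ofReal_ne_top (hx₀ k)
  have hC_ne : Tik S R α yδ Fδ x₀ + 1 ≠ ⊤ := ENNReal.add_ne_top.2 ⟨hC₀, ENNReal.one_ne_top⟩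
  have hev1 : ∀ᶠ l in atTop,
      Tik S R (α' l) (y' l) (F' l) (x' l) < Tik S R α yδ Fδ x₀ + 1 := by
    have := (key x₀ hx₀).eventually (gt_mem_nhds (ENNReal.lt_add_right hC₀ one_ne_zero))
    exact this.mono fun l hl => lt_of_le_of_lt (hmin l x₀) hl
  have hev2 : ∀ᶠ l in atTop, α k₀ / 2 < α' l k₀ :=
    (hαconv k₀).eventually (eventually_gt_nhds (half_lt_self hk₀pos))
  have hofr0 : ENNReal.ofReal (α k₀ / 2) ≠ 0 := (ENNReal.ofReal_pos.2 (half_pos hk₀pos)).ne'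
  have hc_ne : (Tik S R α yδ Fδ x₀ + 1) / ENNReal.ofReal (α k₀ / 2) ≠ ⊤ :=
    (ENNReal.div_lt_top hC_ne hofr0).ne
  have hevR : ∀ᶠ l in atTop,
      R k₀ (x' l) ≤ (Tik S R α yδ Fδ x₀ + 1) / ENNReal.ofReal (α k₀ / 2) := by
    filter_upwards [hev1, hev2] with l h1 h2
    have hterm : ENNReal.ofReal (α k₀ / 2) * R k₀ (x' l) ≤
        Tik S R (α' l) (y' l) (F' l) (x' l) := by
      calc ENNReal.ofReal (α k₀ / 2) * R k₀ (x' l)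
          ≤ ENNReal.ofReal (α' l k₀) * R k₀ (x' l) :=
            mul_le_mul_left (ENNReal.ofReal_le_ofReal h2.le) _
        _ ≤ ∑ k, ENNReal.ofReal (α' l k) * R k (x' l) :=
            Finset.single_le_sum (f := fun k => ENNReal.ofReal (α' l k) * R k (x' l))
              (fun k _ => zero_le) (Finset.mem_univ k₀)
        _ ≤ Tik S R (α' l) (y' l) (F' l) (x' l) := le_add_self
    rw [ENNReal.le_div_iff_mul_le (Or.inl hofr0) (Or.inl ENNReal.ofReal_ne_top), mul_comm]
    exact le_trans hterm h1.le
  obtain ⟨N, hN⟩ := eventually_atTop.1 hevR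
  obtain ⟨xα, ψ, hψ, hψconv⟩ := hcoer k₀ (fun j => x' (N + j)) _ hc_ne
    (fun j => hN _ (Nat.le_add_right _ _))
  refine ⟨fun j => N + ψ j, fun a b h => Nat.add_lt_add_left (hψ h) N, xα, hψconv, fun x => ?_⟩
  set φ : ℕ → ℕ := fun j => N + ψ j with hφ_def
  have hφmono : StrictMono φ := fun a b h => Nat.add_lt_add_left (hψ h) N
  have hφtop : Tendsto φ atTop atTop := hφmono.tendsto_atTop
  have hxφ : Tendsto (fun l => x' (φ l)) atTop (nhds xα) := hψconv
  have hyφ : SigmaTendsto S (fun l => y' (φ l)) yδ := fun z => (hy z).comp hφtop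
  -- lower bound: lower semi-continuity of the Tikhonov functional along the subsequence
  have lower : Tik S R α yδ Fδ xα ≤
      liminf (fun l => Tik S R (α' (φ l)) (y' (φ l)) (F' (φ l)) (x' (φ l))) atTop := by
    have hK : IsSeqCompact (insert xα (Set.range fun l => x' (φ l))) := myIsSeqCompact hxφ
    have hd : Tendsto (fun l => dKL S (insert xα (Set.range fun l => x' (φ l)))
        (insert yδ (Set.range y')) (F' l) Fδ) atTop (nhds 0) := hop _ _ hK hL
    have hdφ := hd.comp hφtop
    have hhle : ∀ l, ENNReal.ofReal
        |S (F' (φ l) (x' (φ l))) (y' (φ l)) - S (Fδ (x' (φ l))) (y' (φ l))| ≤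
        dKL S (insert xα (Set.range fun l => x' (φ l)))
          (insert yδ (Set.range y')) (F' (φ l)) Fδ := fun l =>
      le_dKL S (Set.mem_insert_of_mem _ (Set.mem_range_self l))
        (Set.mem_insert_of_mem _ (Set.mem_range_self (φ l)))
    have hh0 : Tendsto (fun l => ENNReal.ofReal
        |S (F' (φ l) (x' (φ l))) (y' (φ l)) - S (Fδ (x' (φ l))) (y' (φ l))|) atTop (nhds 0) :=
      tendsto_of_tendsto_of_tendsto_of_le_of_le tendsto_const_nhds hdφ (fun l => zero_le) hhle
    have hlscS : S (Fδ xα) yδ ≤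
        liminf (fun l => S (Fδ (x' (φ l))) (y' (φ l))) atTop := hFδ.1 _ xα _ yδ hxφ hyφ
    have step1 : ENNReal.ofReal (S (Fδ xα) yδ) ≤
        liminf (fun l => ENNReal.ofReal (S (Fδ (x' (φ l))) (y' (φ l)))) atTop :=
      myOfRealLiminf (fun l => hS0 _ _) hlscS
    have step2 : ∀ l, ENNReal.ofReal (S (Fδ (x' (φ l))) (y' (φ l))) ≤
        ENNReal.ofReal (S (F' (φ l) (x' (φ l))) (y' (φ l))) +
        ENNReal.ofReal
          |S (F' (φ l) (x' (φ l))) (y' (φ l)) - S (Fδ (x' (φ l))) (y' (φ l))| := by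
      intro l
      refine le_trans (ENNReal.ofReal_le_ofReal ?_) ENNReal.ofReal_add_le
      have : S (Fδ (x' (φ l))) (y' (φ l)) - S (F' (φ l) (x' (φ l))) (y' (φ l)) ≤
          |S (F' (φ l) (x' (φ l))) (y' (φ l)) - S (Fδ (x' (φ l))) (y' (φ l))| := by
        rw [abs_sub_comm]; exact le_abs_self _
      linarith
    have step3 : liminf (fun l => ENNReal.ofReal (S (Fδ (x' (φ l))) (y' (φ l)))) atTop ≤
        liminf (fun l => ENNReal.ofReal (S (F' (φ l) (x' (φ l))) (y' (φ l)))) atTop :=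
      le_trans (liminf_le_liminf (Eventually.of_forall step2)) (myLiminfAddZero hh0)
    have stepR : ∀ k : Fin n, ENNReal.ofReal (α k) * R k xα ≤
        liminf (fun l => ENNReal.ofReal (α' (φ l) k) * R k (x' (φ l))) atTop := by
      intro k
      have ha : Tendsto (fun l => ENNReal.ofReal (α' (φ l) k)) atTop
          (nhds (ENNReal.ofReal (α k))) := ENNReal.tendsto_ofReal ((hαconv k).comp hφtop)
      calc ENNReal.ofReal (α k) * R k xα
          ≤ liminf (fun l => ENNReal.ofReal (α' (φ l) k)) atTop *
            liminf (fun l => R k (x' (φ l))) atTop := by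
            rw [ha.liminf_eq]; exact mul_le_mul_right (hlsc k _ xα hxφ) _
        _ ≤ _ := ENNReal.le_liminf_mul
    have stepSum : ∑ k, ENNReal.ofReal (α k) * R k xα ≤
        liminf (fun l => ∑ k, ENNReal.ofReal (α' (φ l) k) * R k (x' (φ l))) atTop :=
      le_trans (Finset.sum_le_sum fun k _ => stepR k) (mySumLiminf _ _)
    calc Tik S R α yδ Fδ xα
        = ENNReal.ofReal (S (Fδ xα) yδ) + ∑ k, ENNReal.ofReal (α k) * R k xα := rfl
      _ ≤ liminf (fun l => ENNReal.ofReal (S (F' (φ l) (x' (φ l))) (y' (φ l)))) atTop +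
          liminf (fun l => ∑ k, ENNReal.ofReal (α' (φ l) k) * R k (x' (φ l))) atTop :=
          add_le_add (le_trans step1 step3) stepSum
      _ ≤ liminf (fun l => ENNReal.ofReal (S (F' (φ l) (x' (φ l))) (y' (φ l))) +
          ∑ k, ENNReal.ofReal (α' (φ l) k) * R k (x' (φ l))) atTop := myLiminfAdd _ _
      _ = _ := rfl
  -- upper bound: minimality and density of the joint domain
  have upper : ∀ w : X, (∀ k, R k w ≠ ⊤) →
      limsup (fun l => Tik S R (α' (φ l)) (y' (φ l)) (F' (φ l)) (x' (φ l))) atTop ≤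
      Tik S R α yδ Fδ w := by
    intro w hw
    have h2 : Tendsto (fun l => Tik S R (α' (φ l)) (y' (φ l)) (F' (φ l)) w) atTop
        (nhds (Tik S R α yδ Fδ w)) := (key w hw).comp hφtop
    calc limsup (fun l => Tik S R (α' (φ l)) (y' (φ l)) (F' (φ l)) (x' (φ l))) atTop
        ≤ limsup (fun l => Tik S R (α' (φ l)) (y' (φ l)) (F' (φ l)) w) atTop :=
          limsup_le_limsup (Eventually.of_forall fun l => hmin (φ l) w)
      _ = Tik S R α yδ Fδ w := h2.limsup_eq
  obtain ⟨u, hu1, hu2, hu3, hu4⟩ := hFδ.2 x yδ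
  have hTu : Tendsto (fun m => Tik S R α yδ Fδ (u m)) atTop
      (nhds (Tik S R α yδ Fδ x)) := by
    have c1 : Tendsto (fun m => ENNReal.ofReal (S (Fδ (u m)) yδ)) atTop
        (nhds (ENNReal.ofReal (S (Fδ x) yδ))) := ENNReal.tendsto_ofReal hu4
    have c2 : Tendsto (fun m => ∑ k, ENNReal.ofReal (α k) * R k (u m)) atTop
        (nhds (∑ k, ENNReal.ofReal (α k) * R k x)) :=
      tendsto_finset_sum _ fun k _ =>
        ENNReal.Tendsto.const_mul (hu3 k) (Or.inr ENNReal.ofReal_ne_top)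
    exact c1.add c2
  have hxbound : limsup (fun l => Tik S R (α' (φ l)) (y' (φ l)) (F' (φ l)) (x' (φ l))) atTop ≤
      Tik S R α yδ Fδ x :=
    ge_of_tendsto' hTu fun m => upper (u m) (hu1 m)
  exact le_trans lower (le_trans liminf_le_limsup hxbound)
end

section
/- In the stability setting, the sequence of regularisation values at minimisers R_{k₀}(x^(l)) is uniformly bounded for any index k₀ with α_{k₀} > 0, where α = lim α^(l). -/
open Filter Topology
open scoped ENNReal

lemma seqCompactSigma_range_union {Y : Type*} (S : Y → Y → ℝ) (y' : ℕ → Y) (yδ : Y)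
    (hy : SigmaTendsto S y' yδ) : SeqCompactSigma S (Set.range y' ∪ {yδ}) := by
  intro u hu
  by_cases hA : ∃ᶠ l in atTop, u l = yδ
  · obtain ⟨φ, hφ, hval⟩ := extraction_of_frequently_atTop hA
    refine ⟨yδ, Or.inr rfl, φ, hφ, fun z => ?_⟩
    simp only [hval]
    exact tendsto_const_nhds
  · rw [not_frequently] at hA
    obtain ⟨N, hN⟩ := eventually_atTop.mp hA
    have hm : ∀ l : ℕ, ∃ m, u (l + N) = y' m := by
      intro l
      rcases hu (l + N) with h | h
      · obtain ⟨m, hm⟩ := h; exact ⟨m, hm.symm⟩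
      · exact absurd h (hN _ (by omega))
    choose g hg using hm
    by_cases hB : ∃ M, ∃ᶠ i in atTop, g i = M
    · obtain ⟨M, hM⟩ := hB
      obtain ⟨φ, hφ, hval⟩ := extraction_of_frequently_atTop hM
      refine ⟨y' M, Or.inl ⟨M, rfl⟩, fun i => φ i + N, fun a b hab => by
        simpa using hφ hab, fun z => ?_⟩
      have hconst : ∀ i, u (φ i + N) = y' M := fun i => by rw [hg (φ i), hval i]
      simp only [hconst]
      exact tendsto_const_nhds
    · push_neg at hB
      have hgtop : Tendsto g atTop atTop := by
        rw [tendsto_atTop]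
        intro B
        have hall : ∀ᶠ i in atTop, ∀ M ∈ Finset.range (B + 1), g i ≠ M := by
          rw [Filter.eventually_all_finset]
          intro M _
          exact hB M
        filter_upwards [hall] with i hi
        by_contra h
        push_neg at h
        exact hi (g i) (Finset.mem_range.mpr (by omega)) rfl
      refine ⟨yδ, Or.inr rfl, fun i => i + N, fun a b hab => by simpa using hab, fun z => ?_⟩
      have : (fun i => S z (u (i + N))) = fun i => S z (y' (g i)) :=
        funext fun i => by rw [hg i]
      rw [this]
      exact (hy z).comp hgtop

/-- in the stability setting, the regularisation values `R_{k₀}(x^(l))` at the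
minimisers are uniformly bounded (by a finite constant) for any index `k₀` with
`α_{k₀} > 0`, where `α = lim α^(l)`. -/
theorem stability_uniform_bound {X Y : Type*} [TopologicalSpace X] {n : ℕ}
    (S : Y → Y → ℝ) (hS0 : ∀ y z : Y, 0 ≤ S y z) (hSdef : ∀ y z : Y, S y z = 0 ↔ y = z)
    (R : Fin n → X → ℝ≥0∞)
    (hcoer : ∀ k, SeqCoercive (R k)) (hlsc : ∀ k, SeqLSC (R k))
    (hD : ∃ x₀ : X, ∀ k, R k x₀ ≠ ⊤)
    (yδ : Y) (y' : ℕ → Y) (hy : SigmaTendsto S y' yδ)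
    (Fδ : X → Y) (F' : ℕ → X → Y)
    (hFδ : MemFtau S R Fδ) (hF' : ∀ l, MemFtau S R (F' l))
    (hop : OpTendsto S F' Fδ)
    (α : Fin n → ℝ) (hα : ∀ k, 0 ≤ α k)
    (k₀ : Fin n) (hk₀ : 0 < α k₀)
    (α' : ℕ → Fin n → ℝ) (hα' : ∀ l k, 0 ≤ α' l k)
    (hαconv : ∀ k, Tendsto (fun l => α' l k) atTop (nhds (α k)))
    (x' : ℕ → X)
    (hmin : ∀ l x, Tik S R (α' l) (y' l) (F' l) (x' l) ≤ Tik S R (α' l) (y' l) (F' l) x) :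
    ∃ C : ℝ≥0∞, C ≠ ⊤ ∧ ∀ᶠ l in atTop, R k₀ (x' l) ≤ C := by
  
  obtain ⟨x₀, hx₀⟩ := hD
  set L : Set Y := Set.range y' ∪ {yδ} with hLdef
  have hL : SeqCompactSigma S L := seqCompactSigma_range_union S y' yδ hy
  have hK : IsSeqCompact ({x₀} : Set X) := by
    intro u hu
    refine ⟨x₀, rfl, id, strictMono_id, ?_⟩
    have : u ∘ id = fun _ => x₀ := funext fun n => hu n
    rw [this]
    exact tendsto_const_nhds
  have hE1 : ∀ᶠ l in atTop, dKL S {x₀} L (F' l) Fδ < 1 :=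
    hop {x₀} L hK hL (Iio_mem_nhds (by norm_num))
  have hE2 : ∀ᶠ l in atTop, |S (Fδ x₀) (y' l) - S (Fδ x₀) yδ| < 1 := by
    have h := Metric.tendsto_atTop.mp (hy (Fδ x₀)) 1 one_pos
    obtain ⟨N, hN⟩ := h
    filter_upwards [eventually_ge_atTop N] with l hl
    simpa [Real.dist_eq] using hN l hl
  have hE3 : ∀ᶠ l in atTop, ∀ k, α' l k ≤ α k + 1 := by
    rw [eventually_all]
    intro k
    filter_upwards [hαconv k (Iio_mem_nhds (by linarith [hα k] : α k < α k + 1))] with l hl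
    exact le_of_lt hl
  have hE4 : ∀ᶠ l in atTop, α k₀ / 2 ≤ α' l k₀ := by
    filter_upwards [hαconv k₀ (Ioi_mem_nhds (by linarith : α k₀ / 2 < α k₀))] with l hl
    exact le_of_lt hl
  set B : ℝ≥0∞ := ENNReal.ofReal (S (Fδ x₀) yδ + 2) +
    ∑ k, ENNReal.ofReal (α k + 1) * R k x₀ with hBdef
  have hBne : B ≠ ⊤ := by
    rw [hBdef]
    refine ENNReal.add_ne_top.mpr ⟨ENNReal.ofReal_ne_top, ?_⟩
    rw [← lt_top_iff_ne_top]
    refine ENNReal.sum_lt_top.mpr fun k _ => ?_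
    exact ENNReal.mul_lt_top ENNReal.ofReal_lt_top (lt_top_iff_ne_top.mpr (hx₀ k))
  have hd0 : ENNReal.ofReal (α k₀ / 2) ≠ 0 :=
    (ENNReal.ofReal_pos.mpr (by linarith)).ne'
  refine ⟨B / ENNReal.ofReal (α k₀ / 2),
    (ENNReal.div_lt_top hBne hd0).ne, ?_⟩
  filter_upwards [hE1, hE2, hE3, hE4] with l h1 h2 h3 h4
  -- key1 : S (F' l x₀) (y' l) ≤ S (Fδ x₀) yδ + 2
  have hmem : y' l ∈ L := Or.inl ⟨l, rfl⟩
  have hterm : ENNReal.ofReal |S (F' l x₀) (y' l) - S (Fδ x₀) (y' l)| ≤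
      dKL S {x₀} L (F' l) Fδ := by
    calc ENNReal.ofReal |S (F' l x₀) (y' l) - S (Fδ x₀) (y' l)|
        ≤ ⨆ z ∈ L, ENNReal.ofReal |S (F' l x₀) z - S (Fδ x₀) z| :=
          le_biSup (fun z => ENNReal.ofReal |S (F' l x₀) z - S (Fδ x₀) z|) hmem
      _ ≤ dKL S {x₀} L (F' l) Fδ :=
          le_biSup (fun x => ⨆ z ∈ L, ENNReal.ofReal |S (F' l x) z - S (Fδ x) z|) rfl
  have habs : |S (F' l x₀) (y' l) - S (Fδ x₀) (y' l)| < 1 :=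
    ENNReal.ofReal_lt_one.mp (lt_of_le_of_lt hterm h1)
  have key1 : S (F' l x₀) (y' l) ≤ S (Fδ x₀) yδ + 2 := by
    have h1' := abs_lt.mp habs
    have h2' := abs_lt.mp h2
    linarith [h1'.2, h2'.2]
  have key2 : Tik S R (α' l) (y' l) (F' l) (x' l) ≤ B := by
    refine (hmin l x₀).trans ?_
    rw [Tik, hBdef]
    refine add_le_add (ENNReal.ofReal_le_ofReal key1) ?_
    exact Finset.sum_le_sum fun k _ =>
      mul_le_mul' (ENNReal.ofReal_le_ofReal (h3 k)) le_rfl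
  have key3 : ENNReal.ofReal (α k₀ / 2) * R k₀ (x' l) ≤ B := by
    calc ENNReal.ofReal (α k₀ / 2) * R k₀ (x' l)
        ≤ ENNReal.ofReal (α' l k₀) * R k₀ (x' l) :=
          mul_le_mul' (ENNReal.ofReal_le_ofReal h4) le_rfl
      _ ≤ ∑ k, ENNReal.ofReal (α' l k) * R k (x' l) :=
          Finset.single_le_sum (f := fun k => ENNReal.ofReal (α' l k) * R k (x' l)) (fun k _ => zero_le) (Finset.mem_univ k₀)
      _ ≤ Tik S R (α' l) (y' l) (F' l) (x' l) := le_add_self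
      _ ≤ B := key2
  rw [ENNReal.le_div_iff_mul_le (Or.inl hd0) (Or.inl ENNReal.ofReal_ne_top)]
  rwa [mul_comm] at key3
end

section
/- If x^(l) → x₀ in τ, y^(l) → y^δ in σ, F^(l) → F^δ in the d_{K,L}-sense with F^δ ∈ F(τ), the R_k are τ-lower semi-continuous, and α^(l) → α in ℝⁿ≥0, then T(x₀; α, y^δ, F^δ) ≤ liminf_l T(x^(l); α^(l), y^(l), F^(l)). -/
open Filter Topology
open scoped ENNReal

section Aux

open Filter

private lemma aux_le_liminf_add {α : Type*} {f : Filter α} {u v : α → ℝ≥0∞} :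
    liminf u f + liminf v f ≤ liminf (fun x => u x + v x) f := by
  refine (le_liminf_iff (by isBoundedDefault) (by isBoundedDefault)).2 fun c hc => ?_
  rcases eq_or_ne (liminf u f) 0 with h0 | h0
  · rw [h0, zero_add] at hc
    filter_upwards [eventually_lt_of_lt_liminf hc] with x hx
    exact hx.trans_le le_add_self
  rcases eq_or_ne (liminf v f) 0 with h1 | h1
  · rw [h1, add_zero] at hc
    filter_upwards [eventually_lt_of_lt_liminf hc] with x hx
    exact hx.trans_le le_self_add
  obtain ⟨a, ha, b, hb, hc'⟩ := ENNReal.exists_lt_add_of_lt_add hc h0 h1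
  filter_upwards [eventually_lt_of_lt_liminf ha, eventually_lt_of_lt_liminf hb] with x h1x h2x
  exact hc'.trans_le (add_le_add h1x.le h2x.le)

private lemma aux_sum_liminf {α ι : Type*} {f : Filter α} (s : Finset ι) (g : ι → α → ℝ≥0∞) :
    ∑ k ∈ s, liminf (g k) f ≤ liminf (fun x => ∑ k ∈ s, g k x) f := by
  classical
  induction s using Finset.induction with
  | empty => simp
  | @insert a s ha ih =>
    rw [Finset.sum_insert ha]
    calc liminf (g a) f + ∑ k ∈ s, liminf (g k) f
        ≤ liminf (g a) f + liminf (fun x => ∑ k ∈ s, g k x) f := add_le_add_right ih _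
      _ ≤ liminf (fun x => g a x + ∑ k ∈ s, g k x) f := aux_le_liminf_add
      _ = liminf (fun x => ∑ k ∈ insert a s, g k x) f := by
          simp only [Finset.sum_insert ha]

private lemma aux_liminf_add_le {α : Type*} {f : Filter α} [f.NeBot] {u v : α → ℝ≥0∞}
    (hu : Tendsto u f (nhds 0)) :
    liminf (fun x => u x + v x) f ≤ liminf v f := by
  refine ENNReal.le_of_forall_pos_le_add fun ε hε _ => ?_
  have hev : ∀ᶠ x in f, u x + v x ≤ v x + (ε : ℝ≥0∞) := by
    have h2 : ∀ᶠ x in f, u x < (ε : ℝ≥0∞) :=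
      hu.eventually_lt_const (by exact_mod_cast hε)
    filter_upwards [h2] with x hx
    rw [add_comm]
    exact add_le_add_right hx.le _
  have heq : liminf (fun x => v x + (ε : ℝ≥0∞)) f ≤ liminf v f + ε := by
    have h3 : (fun x => (v x + (ε : ℝ≥0∞)) - ε) = v := by
      funext x; exact ENNReal.add_sub_cancel_right ENNReal.coe_ne_top
    have h4 := ENNReal.liminf_sub_const f (fun x => v x + (ε : ℝ≥0∞)) (ε : ℝ≥0∞)
    rw [h3] at h4
    exact tsub_le_iff_right.mp h4.symm.le
  exact (liminf_le_liminf hev).trans heq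

private lemma aux_seq {A : Type*} (G : A → Filter A) (hG : ∀ a, pure a ≤ G a)
    (x' : ℕ → A) (x₀ : A) (h : Tendsto x' atTop (G x₀))
    (u : ℕ → A) (hu : ∀ l, u l ∈ insert x₀ (Set.range x')) :
    ∃ p ∈ insert x₀ (Set.range x'), ∃ φ : ℕ → ℕ, StrictMono φ ∧
      Tendsto (fun l => u (φ l)) atTop (G p) := by
  by_cases hc : ∃ a ∈ insert x₀ (Set.range x'), ∃ᶠ l in atTop, u l = a
  · obtain ⟨a, ha, hfreq⟩ := hc
    obtain ⟨φ, hφ, heq⟩ := Filter.extraction_of_frequently_atTop hfreq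
    refine ⟨a, ha, φ, hφ, ?_⟩
    have hfun : (fun l => u (φ l)) = fun _ => a := funext heq
    rw [hfun]
    exact tendsto_const_pure.mono_right (hG a)
  · push_neg at hc
    have hne : ∀ a ∈ insert x₀ (Set.range x'), ∀ᶠ l in atTop, u l ≠ a := by
      intro a ha
      exact hc a ha
    have hrange : ∀ᶠ l in atTop, u l ∈ Set.range x' := by
      filter_upwards [hne x₀ (Set.mem_insert _ _)] with l hl
      rcases hu l with h1 | h2
      · exact absurd h1 hl
      · exact h2
    classical
    set m : ℕ → ℕ := fun l => if hl : u l ∈ Set.range x' then hl.choose else 0 with hm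
    have hml : ∀ l, u l ∈ Set.range x' → u l = x' (m l) := by
      intro l hl
      simp only [hm, dif_pos hl]
      exact hl.choose_spec.symm
    have hmt : Tendsto m atTop atTop := by
      rw [tendsto_atTop_atTop]
      intro b
      have hall : ∀ᶠ l in atTop, ∀ j ∈ Finset.range b, u l ≠ x' j :=
        ((Finset.range b).eventually_all).2 fun j _ =>
          hne (x' j) (Set.mem_insert_iff.2 (Or.inr ⟨j, rfl⟩))
      obtain ⟨N, hN⟩ := (hrange.and hall).exists_forall_of_atTop
      refine ⟨N, fun l hl => ?_⟩
      obtain ⟨h1, h2⟩ := hN l hl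
      by_contra hlt
      push_neg at hlt
      exact h2 (m l) (Finset.mem_range.2 hlt) (hml l h1)
    refine ⟨x₀, Set.mem_insert _ _, id, strictMono_id, ?_⟩
    have heq' : (fun l => u l) =ᶠ[atTop] fun l => x' (m l) := by
      filter_upwards [hrange] with l hl using hml l hl
    exact Tendsto.congr' heq'.symm (h.comp hmt)

end Aux

/-- joint sequential lower semi-continuity of the Tikhonov functional: if
`x^(l) → x₀` in `τ`, `y^(l) → y^δ` in `σ`, `F^(l) → F^δ` in the `d_{K,L}`-sense with
`F^δ ∈ F(τ)`, the `R_k` are `τ`-lower semi-continuous and `α^(l) → α`, then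
`T(x₀; α, y^δ, F^δ) ≤ liminf_l T(x^(l); α^(l), y^(l), F^(l))`. -/
theorem tikhonov_lsc {X Y : Type*} [TopologicalSpace X] {n : ℕ}
    (S : Y → Y → ℝ) (hS0 : ∀ y z : Y, 0 ≤ S y z) (hSdef : ∀ y z : Y, S y z = 0 ↔ y = z)
    (R : Fin n → X → ℝ≥0∞) (hlsc : ∀ k, SeqLSC (R k))
    (yδ : Y) (y' : ℕ → Y) (hy : SigmaTendsto S y' yδ)
    (Fδ : X → Y) (F' : ℕ → X → Y) (hFδlsc : SeqLSCop S Fδ) (hop : OpTendsto S F' Fδ)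
    (α : Fin n → ℝ) (hα : ∀ k, 0 ≤ α k)
    (α' : ℕ → Fin n → ℝ) (hα' : ∀ l k, 0 ≤ α' l k)
    (hαconv : ∀ k, Tendsto (fun l => α' l k) atTop (nhds (α k)))
    (x' : ℕ → X) (x₀ : X) (hx : Tendsto x' atTop (nhds x₀)) :
    Tik S R α yδ Fδ x₀ ≤ liminf (fun l => Tik S R (α' l) (y' l) (F' l) (x' l)) atTop := by
    classical
  set K : Set X := insert x₀ (Set.range x') with hKdef
  set L : Set Y := insert yδ (Set.range y') with hLdef
  -- the σ-neighbourhood filter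
  set G : Y → Filter Y := fun p => ⨅ z : Y, Filter.comap (S z) (nhds (S z p)) with hGdef
  have hGpure : ∀ p, pure p ≤ G p := by
    intro p
    refine le_iInf fun z => ?_
    rw [← Filter.map_le_iff_le_comap, Filter.map_pure]
    exact pure_le_nhds _
  have hGiff : ∀ (y : ℕ → Y) (p : Y), SigmaTendsto S y p ↔ Tendsto y atTop (G p) := by
    intro y p
    rw [hGdef]
    simp only [tendsto_iInf, tendsto_comap_iff]
    exact forall_congr' fun z => Iff.rfl
  have hK : IsSeqCompact K := fun u hu =>
    aux_seq (fun p => nhds p) pure_le_nhds x' x₀ hx u hu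
  have hL : SeqCompactSigma S L := by
    intro u hu
    obtain ⟨p, hp, φ, hφ, ht⟩ := aux_seq G hGpure y' yδ ((hGiff y' yδ).1 hy) u hu
    exact ⟨p, hp, φ, hφ, (hGiff _ p).2 ht⟩
  have hd : Tendsto (fun l => dKL S K L (F' l) Fδ) atTop (nhds 0) := hop K L hK hL
  set d : ℕ → ℝ≥0∞ := fun l => dKL S K L (F' l) Fδ with hddef
  set A : ℕ → ℝ≥0∞ := fun l => ENNReal.ofReal (S (F' l (x' l)) (y' l)) with hAdef
  have hxK : ∀ l, x' l ∈ K := fun l => Set.mem_insert_iff.2 (Or.inr ⟨l, rfl⟩)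
  have hyL : ∀ l, y' l ∈ L := fun l => Set.mem_insert_iff.2 (Or.inr ⟨l, rfl⟩)
  have bound : ∀ l, ENNReal.ofReal (S (Fδ (x' l)) (y' l)) ≤ d l + A l := by
    intro l
    have h1 : S (Fδ (x' l)) (y' l) ≤
        |S (F' l (x' l)) (y' l) - S (Fδ (x' l)) (y' l)| + S (F' l (x' l)) (y' l) := by
      have := neg_abs_le (S (F' l (x' l)) (y' l) - S (Fδ (x' l)) (y' l))
      linarith
    have h2 : ENNReal.ofReal |S (F' l (x' l)) (y' l) - S (Fδ (x' l)) (y' l)| ≤ d l := by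
      calc ENNReal.ofReal |S (F' l (x' l)) (y' l) - S (Fδ (x' l)) (y' l)|
          ≤ ⨆ z ∈ L, ENNReal.ofReal |S (F' l (x' l)) z - S (Fδ (x' l)) z| :=
            le_iSup₂ (f := fun z (_ : z ∈ L) =>
              ENNReal.ofReal |S (F' l (x' l)) z - S (Fδ (x' l)) z|) (y' l) (hyL l)
        _ ≤ d l :=
            le_iSup₂ (f := fun x (_ : x ∈ K) =>
              ⨆ z ∈ L, ENNReal.ofReal |S (F' l x) z - S (Fδ x) z|) (x' l) (hxK l)
    calc ENNReal.ofReal (S (Fδ (x' l)) (y' l))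
        ≤ ENNReal.ofReal (|S (F' l (x' l)) (y' l) - S (Fδ (x' l)) (y' l)|
            + S (F' l (x' l)) (y' l)) := ENNReal.ofReal_le_ofReal h1
      _ ≤ ENNReal.ofReal |S (F' l (x' l)) (y' l) - S (Fδ (x' l)) (y' l)| + A l :=
          ENNReal.ofReal_add_le
      _ ≤ d l + A l := add_le_add_left h2 _
  -- lower semicontinuity of the data-fit term
  have hg := hFδlsc x' x₀ y' yδ hx hy
  set t : ℝ := S (Fδ x₀) yδ with htdef
  have hstep1 : ENNReal.ofReal t ≤
      liminf (fun l => ENNReal.ofReal (S (Fδ (x' l)) (y' l))) atTop := by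
    refine ENNReal.le_of_forall_pos_le_add fun ε hε _ => ?_
    have hε' : (0 : ℝ) < ε := hε
    by_cases ht : t ≤ (ε : ℝ)
    · calc ENNReal.ofReal t ≤ ENNReal.ofReal (ε : ℝ) := ENNReal.ofReal_le_ofReal ht
        _ = (ε : ℝ≥0∞) := ENNReal.ofReal_coe_nnreal
        _ ≤ _ := le_add_self
    · push_neg at ht
      have hb : Filter.IsBoundedUnder (· ≥ ·) atTop (fun l => S (Fδ (x' l)) (y' l)) :=
        ⟨0, Filter.eventually_map.2 (Filter.Eventually.of_forall fun l => hS0 _ _)⟩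
      have hlt : t - (ε : ℝ) < liminf (fun l => S (Fδ (x' l)) (y' l)) atTop :=
        lt_of_lt_of_le (by linarith) hg
      have hev := Filter.eventually_lt_of_lt_liminf hlt hb
      have hle : ENNReal.ofReal (t - (ε : ℝ)) ≤
          liminf (fun l => ENNReal.ofReal (S (Fδ (x' l)) (y' l))) atTop := by
        refine Filter.le_liminf_of_le (by isBoundedDefault) ?_
        filter_upwards [hev] with l hl
        exact ENNReal.ofReal_le_ofReal hl.le
      calc ENNReal.ofReal t = ENNReal.ofReal ((t - (ε : ℝ)) + (ε : ℝ)) := by ring_nf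
        _ ≤ ENNReal.ofReal (t - (ε : ℝ)) + ENNReal.ofReal (ε : ℝ) := ENNReal.ofReal_add_le
        _ = ENNReal.ofReal (t - (ε : ℝ)) + (ε : ℝ≥0∞) := by rw [ENNReal.ofReal_coe_nnreal]
        _ ≤ _ := add_le_add_left hle _
  have hA : ENNReal.ofReal t ≤ liminf A atTop := by
    calc ENNReal.ofReal t
        ≤ liminf (fun l => ENNReal.ofReal (S (Fδ (x' l)) (y' l))) atTop := hstep1
      _ ≤ liminf (fun l => d l + A l) atTop :=
          Filter.liminf_le_liminf (Filter.Eventually.of_forall bound)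
      _ ≤ liminf A atTop := aux_liminf_add_le hd
  -- lower semicontinuity of the regularisation terms
  have hC : ∀ k : Fin n, ENNReal.ofReal (α k) * R k x₀ ≤
      liminf (fun l => ENNReal.ofReal (α' l k) * R k (x' l)) atTop := by
    intro k
    have h1 : liminf (fun l => ENNReal.ofReal (α' l k)) atTop = ENNReal.ofReal (α k) :=
      ((ENNReal.continuous_ofReal.tendsto _).comp (hαconv k)).liminf_eq
    calc ENNReal.ofReal (α k) * R k x₀
        ≤ liminf (fun l => ENNReal.ofReal (α' l k)) atTop *
            liminf (fun l => R k (x' l)) atTop := by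
          rw [h1]; exact mul_le_mul_right (hlsc k x' x₀ hx) _
      _ ≤ liminf (fun l => ENNReal.ofReal (α' l k) * R k (x' l)) atTop :=
          ENNReal.le_liminf_mul
  have hsum : ∑ k : Fin n, ENNReal.ofReal (α k) * R k x₀ ≤
      liminf (fun l => ∑ k : Fin n, ENNReal.ofReal (α' l k) * R k (x' l)) atTop := by
    calc ∑ k : Fin n, ENNReal.ofReal (α k) * R k x₀
        ≤ ∑ k : Fin n, liminf (fun l => ENNReal.ofReal (α' l k) * R k (x' l)) atTop :=
          Finset.sum_le_sum fun k _ => hC k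
      _ ≤ _ := aux_sum_liminf Finset.univ _
  calc Tik S R α yδ Fδ x₀
      = ENNReal.ofReal t + ∑ k : Fin n, ENNReal.ofReal (α k) * R k x₀ := rfl
    _ ≤ liminf A atTop +
        liminf (fun l => ∑ k : Fin n, ENNReal.ofReal (α' l k) * R k (x' l)) atTop :=
        add_le_add hA hsum
    _ ≤ liminf (fun l => A l + ∑ k : Fin n, ENNReal.ofReal (α' l k) * R k (x' l)) atTop :=
        aux_le_liminf_add
    _ = liminf (fun l => Tik S R (α' l) (y' l) (F' l) (x' l)) atTop := rfl
end

section
/- Under the convergence-theorem hypotheses, the regularised residual vanishes in the limit: if x^(l) minimises T(·; α^(l), y^(l), F^(l)), x^(l) → x† in τ, y^(l) → y in σ, F^(l) → F in the d_{K,L}-sense, F(x₀) = y for some x₀ ∈ D, S(y,y^(l)) + d_{K,L}(F^(l),F) → 0 and Σ_k α_k^(l) → 0, then S(F(x†), y) = 0, hence F(x†) = y. -/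
open Filter Topology
open scoped ENNReal

private lemma aux_extract {A : Type*} (x' : ℕ → A) (p : A) (u : ℕ → A)
    (hu : ∀ n, u n ∈ insert p (Set.range x')) :
    (∃ v ∈ insert p (Set.range x'), ∃ φ : ℕ → ℕ, StrictMono φ ∧ ∀ j, u (φ j) = v) ∨
    (∃ φ k : ℕ → ℕ, StrictMono φ ∧ Tendsto k atTop atTop ∧ ∀ j, u (φ j) = x' (k j)) := by
  by_cases hA : ∃ v, {n | u n = v}.Infinite
  · obtain ⟨v, hv⟩ := hA
    obtain ⟨n0, hn0⟩ := hv.nonempty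
    left
    obtain ⟨φ, hφ, hφv⟩ := Filter.extraction_of_frequently_atTop
      (Nat.frequently_atTop_iff_infinite.2 hv)
    exact ⟨v, hn0 ▸ hu n0, φ, hφ, hφv⟩
  · push_neg at hA
    have hfreq : ∀ j : ℕ, ∃ᶠ n in atTop, ∃ k, j ≤ k ∧ u n = x' k := by
      intro j
      by_contra hcon
      have hev : ∀ᶠ n in atTop, ¬ ∃ k, j ≤ k ∧ u n = x' k := by
        simpa using Filter.not_frequently.mp hcon
      obtain ⟨N, hN⟩ := Filter.eventually_atTop.mp hev
      have hsub : {n : ℕ | N ≤ n} ⊆ ⋃ v ∈ insert p (x' '' Set.Iio j), {n | u n = v} := by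
        intro n hn
        rcases hu n with h | ⟨k, hk⟩
        · exact Set.mem_biUnion (Set.mem_insert _ _) h
        · have hkj : k < j := by
            by_contra hkj
            exact hN n hn ⟨k, le_of_not_gt hkj, hk.symm⟩
          exact Set.mem_biUnion (Set.mem_insert_of_mem _ ⟨k, hkj, hk⟩) rfl
      have hfin : (⋃ v ∈ insert p (x' '' Set.Iio j), {n : ℕ | u n = v}).Finite := by
        refine Set.Finite.biUnion ?_ (fun v _ => hA v)
        exact (Set.finite_Iio j).image x' |>.insert p
      exact Set.Ici_infinite N (hfin.subset hsub)
    obtain ⟨φ, hφ, hφk⟩ := Filter.extraction_forall_of_frequently hfreq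
    right
    refine ⟨φ, fun j => (hφk j).choose, hφ, ?_, fun j => (hφk j).choose_spec.2⟩
    exact tendsto_atTop_mono (fun j => (hφk j).choose_spec.1) tendsto_id

private lemma isSeqCompact_insert_range {X : Type*} [TopologicalSpace X] {x' : ℕ → X} {p : X}
    (h : Tendsto x' atTop (nhds p)) : IsSeqCompact (insert p (Set.range x')) := by
  intro u hu
  rcases aux_extract x' p u hu with ⟨v, hv, φ, hφ, hconst⟩ | ⟨φ, k, hφ, hk, heq⟩
  · refine ⟨v, hv, φ, hφ, ?_⟩
    have : (u ∘ φ) = fun _ => v := funext hconst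
    rw [this]; exact tendsto_const_nhds
  · refine ⟨p, Set.mem_insert _ _, φ, hφ, ?_⟩
    have : (u ∘ φ) = fun j => x' (k j) := funext heq
    rw [this]; exact h.comp hk

private lemma seqCompactSigma_insert_range {Y : Type*} (S : Y → Y → ℝ) {y' : ℕ → Y} {p : Y}
    (h : SigmaTendsto S y' p) : SeqCompactSigma S (insert p (Set.range y')) := by
  intro u hu
  rcases aux_extract y' p u hu with ⟨v, hv, φ, hφ, hconst⟩ | ⟨φ, k, hφ, hk, heq⟩
  · refine ⟨v, hv, φ, hφ, fun z => ?_⟩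
    have : (fun l => S z (u (φ l))) = fun _ => S z v := funext fun l => by rw [hconst l]
    rw [this]; exact tendsto_const_nhds
  · refine ⟨p, Set.mem_insert _ _, φ, hφ, fun z => ?_⟩
    have : (fun l => S z (u (φ l))) = fun l => S z (y' (k l)) := funext fun l => by rw [heq l]
    rw [this]; exact (h z).comp hk

private lemma ennreal_tendsto_zero_of_le {α : Type*} {f g : α → ℝ≥0∞} {l : Filter α}
    (hg : Tendsto g l (nhds 0)) (hle : ∀ a, f a ≤ g a) : Tendsto f l (nhds 0) :=
  tendsto_of_tendsto_of_tendsto_of_le_of_le tendsto_const_nhds hg (fun _ => zero_le) hle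

/-- in the setting of the convergence theorem, the regularised residual
vanishes in the limit: if `x^(l)` minimises `T(·; α^(l), y^(l), F^(l))`, `x^(l) → x†`
in `τ`, `y^(l) → y` in `σ`, `F^(l) → F` in the `d_{K,L}`-sense, `F(x₀) = y` for some
`x₀ ∈ D`, `S(y,y^(l)) + d_{K,L}(F^(l),F) → 0` and `Σ_k α_k^(l) → 0`, then
`S(F(x†), y) = 0` and hence `F(x†) = y`. -/
theorem residual_vanishes {X Y : Type*} [TopologicalSpace X] {n : ℕ}
    (S : Y → Y → ℝ) (hS0 : ∀ y z : Y, 0 ≤ S y z) (hSdef : ∀ y z : Y, S y z = 0 ↔ y = z)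
    (R : Fin n → X → ℝ≥0∞)
    (hcoer : ∀ k, SeqCoercive (R k)) (hlsc : ∀ k, SeqLSC (R k))
    (F : X → Y) (F' : ℕ → X → Y) (hF : MemFtau S R F) (hF' : ∀ l, MemFtau S R (F' l))
    (hop : OpTendsto S F' F)
    (y : Y) (x₀ : X) (hx₀D : ∀ k, R k x₀ ≠ ⊤) (hx₀sol : F x₀ = y)
    (y' : ℕ → Y) (hy : SigmaTendsto S y' y)
    (α : ℕ → Fin n → ℝ) (hα : ∀ l k, 0 ≤ α l k) (hαne : ∀ l, α l ≠ 0)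
    (K : Set X) (hK : K = {x : X | ∃ k, R k x ≤ R k x₀ + 1})
    (L : Set Y) (hL : L = insert y (Set.range y'))
    (hnoise : Tendsto (fun l => ENNReal.ofReal (S y (y' l)) + dKL S K L (F' l) F)
        atTop (nhds 0))
    (hαto0 : Tendsto (fun l => ∑ k, α l k) atTop (nhds 0))
    (x' : ℕ → X)
    (hmin : ∀ l x, Tik S R (α l) (y' l) (F' l) (x' l) ≤ Tik S R (α l) (y' l) (F' l) x)
    (xdag : X) (hxdag : Tendsto x' atTop (nhds xdag)) :
    S (F xdag) y = 0 ∧ F xdag = y := by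
  have hn : 0 < n := by
    rcases Nat.eq_zero_or_pos n with h | h
    · subst h
      exact absurd (funext fun k => k.elim0) (hαne 0)
    · exact h
  have hx₀K : x₀ ∈ K := by
    rw [hK]; exact ⟨⟨0, hn⟩, le_self_add⟩
  have hy'L : ∀ l, y' l ∈ L := fun l => by
    rw [hL]; exact Set.mem_insert_of_mem _ ⟨l, rfl⟩
  have hLc : SeqCompactSigma S L := by
    rw [hL]; exact seqCompactSigma_insert_range S hy
  set K' : Set X := insert xdag (Set.range x') with hK'
  have hK'c : IsSeqCompact K' := isSeqCompact_insert_range hxdag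
  have hx'K' : ∀ l, x' l ∈ K' := fun l => Set.mem_insert_of_mem _ ⟨l, rfl⟩
  have hd' : Tendsto (fun l => dKL S K' L (F' l) F) atTop (nhds 0) := hop K' L hK'c hLc
  have h1 : Tendsto (fun l => ENNReal.ofReal (S y (y' l))) atTop (nhds 0) :=
    ennreal_tendsto_zero_of_le hnoise (fun l => le_self_add)
  have h2 : Tendsto (fun l => dKL S K L (F' l) F) atTop (nhds 0) :=
    ennreal_tendsto_zero_of_le hnoise (fun l => le_add_self)
  set C : ℝ≥0∞ := ∑ k, R k x₀ with hCdef
  have hC : C ≠ ⊤ := (ENNReal.sum_lt_top.mpr (fun k _ => (hx₀D k).lt_top)).ne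
  -- basic dKL bound
  have hdKL : ∀ (K₀ : Set X) (G : X → Y) (x : X) (z : Y), x ∈ K₀ → z ∈ L →
      ENNReal.ofReal (S (G x) z) ≤ ENNReal.ofReal (S (F x) z) + dKL S K₀ L G F := by
    intro K₀ G x z hx hz
    have habs : S (G x) z ≤ S (F x) z + |S (G x) z - S (F x) z| := by
      have := le_abs_self (S (G x) z - S (F x) z); linarith
    calc ENNReal.ofReal (S (G x) z)
        ≤ ENNReal.ofReal (S (F x) z + |S (G x) z - S (F x) z|) :=
          ENNReal.ofReal_le_ofReal habs
      _ ≤ ENNReal.ofReal (S (F x) z) + ENNReal.ofReal |S (G x) z - S (F x) z| :=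
          ENNReal.ofReal_add_le
      _ ≤ ENNReal.ofReal (S (F x) z) + dKL S K₀ L G F := by
          refine add_le_add_right ?_ _
          refine le_trans ?_ (le_iSup₂ (f := fun x (_ : x ∈ K₀) =>
            ⨆ z ∈ L, ENNReal.ofReal |S (G x) z - S (F x) z|) x hx)
          exact le_iSup₂ (f := fun z (_ : z ∈ L) => ENNReal.ofReal |S (G x) z - S (F x) z|) z hz
  -- key inequality
  have key : ∀ l, ENNReal.ofReal (S (F (x' l)) (y' l)) ≤
      dKL S K' L (F' l) F + (ENNReal.ofReal (S y (y' l)) + dKL S K L (F' l) F)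
        + ENNReal.ofReal (∑ k, α l k) * C := by
    intro l
    have step1 : ENNReal.ofReal (S (F (x' l)) (y' l)) ≤
        ENNReal.ofReal (S (F' l (x' l)) (y' l)) + dKL S K' L (F' l) F := by
      have habs : S (F (x' l)) (y' l) ≤
          S (F' l (x' l)) (y' l) + |S (F' l (x' l)) (y' l) - S (F (x' l)) (y' l)| := by
        have := neg_abs_le (S (F' l (x' l)) (y' l) - S (F (x' l)) (y' l)); linarith
      calc ENNReal.ofReal (S (F (x' l)) (y' l))
          ≤ ENNReal.ofReal (S (F' l (x' l)) (y' l)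
              + |S (F' l (x' l)) (y' l) - S (F (x' l)) (y' l)|) :=
            ENNReal.ofReal_le_ofReal habs
        _ ≤ ENNReal.ofReal (S (F' l (x' l)) (y' l))
              + ENNReal.ofReal |S (F' l (x' l)) (y' l) - S (F (x' l)) (y' l)| :=
            ENNReal.ofReal_add_le
        _ ≤ _ := by
            refine add_le_add_right ?_ _
            refine le_trans ?_ (le_iSup₂ (f := fun x (_ : x ∈ K') =>
              ⨆ z ∈ L, ENNReal.ofReal |S (F' l x) z - S (F x) z|) (x' l) (hx'K' l))
            exact le_iSup₂ (f := fun z (_ : z ∈ L) =>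
              ENNReal.ofReal |S (F' l (x' l)) z - S (F (x' l)) z|) (y' l) (hy'L l)
    have step2 : ENNReal.ofReal (S (F' l (x' l)) (y' l)) ≤
        ENNReal.ofReal (S (F' l x₀) (y' l)) + ∑ k, ENNReal.ofReal (α l k) * R k x₀ := by
      calc ENNReal.ofReal (S (F' l (x' l)) (y' l))
          ≤ Tik S R (α l) (y' l) (F' l) (x' l) := le_self_add
        _ ≤ Tik S R (α l) (y' l) (F' l) x₀ := hmin l x₀
        _ = _ := rfl
    have step3 : ENNReal.ofReal (S (F' l x₀) (y' l)) ≤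
        ENNReal.ofReal (S y (y' l)) + dKL S K L (F' l) F := by
      have := hdKL K (F' l) x₀ (y' l) hx₀K (hy'L l)
      rwa [hx₀sol] at this
    have step4 : ∑ k, ENNReal.ofReal (α l k) * R k x₀ ≤ ENNReal.ofReal (∑ k, α l k) * C := by
      rw [hCdef, Finset.mul_sum]
      refine Finset.sum_le_sum fun k _ => ?_
      refine mul_le_mul_left (ENNReal.ofReal_le_ofReal ?_) _
      exact Finset.single_le_sum (fun j _ => hα l j) (Finset.mem_univ k)
    calc ENNReal.ofReal (S (F (x' l)) (y' l))
        ≤ ENNReal.ofReal (S (F' l (x' l)) (y' l)) + dKL S K' L (F' l) F := step1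
      _ ≤ (ENNReal.ofReal (S (F' l x₀) (y' l)) + ∑ k, ENNReal.ofReal (α l k) * R k x₀)
            + dKL S K' L (F' l) F := add_le_add_left step2 _
      _ ≤ ((ENNReal.ofReal (S y (y' l)) + dKL S K L (F' l) F)
            + ENNReal.ofReal (∑ k, α l k) * C) + dKL S K' L (F' l) F :=
          add_le_add_left (add_le_add step3 step4) _
      _ = _ := by ring
  -- the bound tends to 0
  have hb : Tendsto (fun l => dKL S K' L (F' l) F
      + (ENNReal.ofReal (S y (y' l)) + dKL S K L (F' l) F)
      + ENNReal.ofReal (∑ k, α l k) * C) atTop (nhds 0) := by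
    have h3 : Tendsto (fun l => ENNReal.ofReal (∑ k, α l k) * C) atTop (nhds 0) := by
      have := ENNReal.Tendsto.mul_const (ENNReal.tendsto_ofReal (a := 0) hαto0) (b := C) (Or.inr hC)
      simpa using this
    have := (hd'.add (h1.add h2)).add h3
    simpa using this
  have hto0 : Tendsto (fun l => ENNReal.ofReal (S (F (x' l)) (y' l))) atTop (nhds 0) :=
    ennreal_tendsto_zero_of_le hb key
  have hreal : Tendsto (fun l => S (F (x' l)) (y' l)) atTop (nhds 0) := by
    have := (ENNReal.tendsto_toReal (a := 0) (by simp)).comp hto0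
    simp only [Function.comp, ENNReal.toReal_zero] at this
    refine this.congr fun l => ?_
    exact ENNReal.toReal_ofReal (hS0 _ _)
  have hliminf : S (F xdag) y ≤ liminf (fun l => S (F (x' l)) (y' l)) atTop :=
    hF.1 x' xdag y' y hxdag hy
  rw [hreal.liminf_eq] at hliminf
  have hzero : S (F xdag) y = 0 := le_antisymm hliminf (hS0 _ _)
  exact ⟨hzero, (hSdef _ _).mp hzero⟩
end
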